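/- Let σ be a density matrix on H_A ⊗ H_B (finite-dimensional) and suppose that for all unit vectors x ∈ H_A, y ∈ H_B, ⟨x⊗y, σ(x⊗y)⟩ = ⟨x, σ_A x⟩ · ⟨y, σ_B y⟩, where σ_A = tr_B σ and σ_B = tr_A σ. Then σ = σ_A ⊗ σ_B. -/

import Mathlib

open scoped ComplexOrder Kronecker

/-- The partial trace over the first (A) factor of an operator on H_A ⊗ H_B. -/
noncomputable def ptraceA {n m : ℕ} (σ : Matrix (Fin n × Fin m) (Fin n × Fin m) ℂ) :
    Matrix (Fin m) (Fin m) ℂ := fun j j' => ∑ i, σ (i, j) (i, j')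

/-- The partial trace over the second (B) factor of an operator on H_A ⊗ H_B. -/
noncomputable def ptraceB {n m : ℕ} (σ : Matrix (Fin n × Fin m) (Fin n × Fin m) ℂ) :
    Matrix (Fin n) (Fin n) ℂ := fun i i' => ∑ j, σ (i, j) (i', j)

/-- The tensor product x ⊗ y of vectors, as a vector on the product index set. -/
noncomputable def tensorVec {n m : ℕ} (x : Fin n → ℂ) (y : Fin m → ℂ) :
    Fin n × Fin m → ℂ := fun p => x p.1 * y p.2

open Matrix

/-- A complex matrix with vanishing quadratic form is zero. -/
lemma quad_zero' {k : Type*} [Fintype k] [DecidableEq k] (M : Matrix k k ℂ)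
    (h : ∀ v : k → ℂ, star v ⬝ᵥ M.mulVec v = 0) : M = 0 := by
  have hdiag : ∀ c, M c c = 0 := by
    intro c
    have := h (Pi.single c 1)
    simpa [dotProduct, Matrix.mulVec, Pi.single_apply, apply_ite,
      Finset.sum_ite_eq, Finset.sum_ite_eq'] using this
  ext a b
  by_cases hab : a = b
  · subst hab; simpa using hdiag a
  · have key : ∀ c : ℂ, c * M a b + (starRingEnd ℂ) c * M b a = 0 := by
      intro c
      have := h (Pi.single a 1 + Pi.single b c)
      simp only [star_add, Matrix.mulVec_add, dotProduct_add, add_dotProduct] at this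
      simp [dotProduct, Matrix.mulVec, Pi.single_apply, apply_ite,
        Finset.sum_ite_eq, Finset.sum_ite_eq', hab, Ne.symm hab, hdiag] at this
      linear_combination this
    have h1 := key 1
    have h2 := key Complex.I
    rw [Complex.conj_I] at h2
    have h3 : M a b - M b a = 0 := by
      have hI : Complex.I * (M a b - M b a) = 0 := by linear_combination h2
      rcases mul_eq_zero.mp hI with h | h
      · exact absurd h Complex.I_ne_zero
      · exact h
    rw [_root_.map_one] at h1
    have : M a b = 0 := by linear_combination (h1 + h3) / 2
    simpa using this

lemma tensor_quad {n m : ℕ} (M : Matrix (Fin n × Fin m) (Fin n × Fin m) ℂ)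
    (x : Fin n → ℂ) (y : Fin m → ℂ) :
    star (tensorVec x y) ⬝ᵥ M.mulVec (tensorVec x y)
      = star x ⬝ᵥ (Matrix.of fun i i' =>
          star y ⬝ᵥ (Matrix.of fun j j' => M (i, j) (i', j')).mulVec y).mulVec x := by
  simp only [dotProduct, Matrix.mulVec, tensorVec, Pi.star_apply, Matrix.of_apply,
    Fintype.sum_prod_type, Finset.mul_sum, Finset.sum_mul]
  refine Finset.sum_congr rfl fun i _ => ?_
  rw [Finset.sum_comm]
  refine Finset.sum_congr rfl fun i' _ => ?_
  refine Finset.sum_congr rfl fun j _ => ?_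
  refine Finset.sum_congr rfl fun j' _ => ?_
  simp only [star_mul']
  ring

lemma kron_quad {n m : ℕ} (A : Matrix (Fin n) (Fin n) ℂ) (B : Matrix (Fin m) (Fin m) ℂ)
    (x : Fin n → ℂ) (y : Fin m → ℂ) :
    star (tensorVec x y) ⬝ᵥ (A ⊗ₖ B).mulVec (tensorVec x y)
      = (star x ⬝ᵥ A.mulVec x) * (star y ⬝ᵥ B.mulVec y) := by
  rw [tensor_quad]
  have hM : (Matrix.of fun i i' =>
      star y ⬝ᵥ (Matrix.of fun j j' => (A ⊗ₖ B) (i, j) (i', j')).mulVec y)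
      = (star y ⬝ᵥ B.mulVec y) • A := by
    ext i i'
    simp only [Matrix.of_apply, dotProduct, Matrix.mulVec, Matrix.kroneckerMap_apply,
      Pi.star_apply, Matrix.smul_apply, smul_eq_mul, Finset.mul_sum, Finset.sum_mul]
    refine Finset.sum_congr rfl fun j _ => ?_
    refine Finset.sum_congr rfl fun j' _ => ?_
    ring
  rw [hM, Matrix.smul_mulVec, dotProduct_smul, smul_eq_mul, mul_comm]

lemma smul_quad {k : Type*} [Fintype k] (M : Matrix k k ℂ) (c : ℝ) (v : k → ℂ) :
    star ((c : ℂ) • v) ⬝ᵥ M.mulVec ((c : ℂ) • v)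
      = ((c : ℂ)) ^ 2 * (star v ⬝ᵥ M.mulVec v) := by
  rw [star_smul, Matrix.mulVec_smul, smul_dotProduct, dotProduct_smul]
  simp only [smul_eq_mul, Complex.star_def, Complex.conj_ofReal]
  ring

lemma tensorVec_smul {n m : ℕ} (a b : ℝ) (x : Fin n → ℂ) (y : Fin m → ℂ) :
    tensorVec ((a : ℂ) • x) ((b : ℂ) • y) = (((a * b : ℝ)) : ℂ) • tensorVec x y := by
  funext p
  simp only [tensorVec, Pi.smul_apply, smul_eq_mul]
  push_cast
  ring

/-- If a density matrix σ on H_A ⊗ H_B satisfies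
⟨x⊗y, σ(x⊗y)⟩ = ⟨x, σ_A x⟩⟨y, σ_B y⟩ for all unit vectors x ∈ H_A, y ∈ H_B,
with σ_A = tr_B σ and σ_B = tr_A σ, then σ = σ_A ⊗ σ_B. -/
theorem stmt_14 (n m : ℕ) (hn : 1 ≤ n) (hm : 1 ≤ m)
    (σ : Matrix (Fin n × Fin m) (Fin n × Fin m) ℂ)
    (hσpos : σ.PosSemidef) (hσtr : σ.trace = 1)
    (h : ∀ (x : Fin n → ℂ) (y : Fin m → ℂ),
      (∑ i, ‖x i‖ ^ 2 = 1) → (∑ j, ‖y j‖ ^ 2 = 1) →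
      dotProduct (star (tensorVec x y)) (σ.mulVec (tensorVec x y))
        = dotProduct (star x) ((ptraceB σ).mulVec x) *
          dotProduct (star y) ((ptraceA σ).mulVec y)) :
    σ = (ptraceB σ) ⊗ₖ (ptraceA σ) := by
  set A := ptraceB σ with hA
  set B := ptraceA σ with hB
  -- Step 1: extend the hypothesis to all (not necessarily unit) vectors.
  have h2 : ∀ (x : Fin n → ℂ) (y : Fin m → ℂ),
      star (tensorVec x y) ⬝ᵥ σ.mulVec (tensorVec x y)
        = (star x ⬝ᵥ A.mulVec x) * (star y ⬝ᵥ B.mulVec y) := by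
    intro x y
    by_cases hx : x = 0
    · subst hx
      have ht : tensorVec (0 : Fin n → ℂ) y = 0 := by funext p; simp [tensorVec]
      simp [ht]
    by_cases hy : y = 0
    · subst hy
      have ht : tensorVec x (0 : Fin m → ℂ) = 0 := by funext p; simp [tensorVec]
      simp [ht]
    have hSx : 0 < ∑ i, ‖x i‖ ^ 2 := by
      obtain ⟨i, hi⟩ : ∃ i, x i ≠ 0 := by
        by_contra hc; push_neg at hc; exact hx (funext hc)
      exact Finset.sum_pos' (fun _ _ => by positivity)
        ⟨i, Finset.mem_univ i, pow_pos (norm_pos_iff.mpr hi) 2⟩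
    have hSy : 0 < ∑ j, ‖y j‖ ^ 2 := by
      obtain ⟨j, hj⟩ : ∃ j, y j ≠ 0 := by
        by_contra hc; push_neg at hc; exact hy (funext hc)
      exact Finset.sum_pos' (fun _ _ => by positivity)
        ⟨j, Finset.mem_univ j, pow_pos (norm_pos_iff.mpr hj) 2⟩
    set rx := Real.sqrt (∑ i, ‖x i‖ ^ 2) with hrxdef
    set ry := Real.sqrt (∑ j, ‖y j‖ ^ 2) with hrydef
    have hrx : 0 < rx := Real.sqrt_pos.mpr hSx
    have hry : 0 < ry := Real.sqrt_pos.mpr hSy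
    have hrx2 : rx ^ 2 = ∑ i, ‖x i‖ ^ 2 := Real.sq_sqrt hSx.le
    have hry2 : ry ^ 2 = ∑ j, ‖y j‖ ^ 2 := Real.sq_sqrt hSy.le
    have hx' : ∑ i, ‖(((rx⁻¹ : ℝ) : ℂ) • x) i‖ ^ 2 = 1 := by
      simp only [Pi.smul_apply, norm_smul, Complex.norm_real, Real.norm_eq_abs, mul_pow, ← Finset.mul_sum]
      rw [← hrx2, abs_of_pos (inv_pos.mpr hrx), inv_pow]
      exact inv_mul_cancel₀ (pow_ne_zero 2 hrx.ne')
    have hy' : ∑ j, ‖(((ry⁻¹ : ℝ) : ℂ) • y) j‖ ^ 2 = 1 := by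
      simp only [Pi.smul_apply, norm_smul, Complex.norm_real, Real.norm_eq_abs, mul_pow, ← Finset.mul_sum]
      rw [← hry2, abs_of_pos (inv_pos.mpr hry), inv_pow]
      exact inv_mul_cancel₀ (pow_ne_zero 2 hry.ne')
    have key := h (((rx⁻¹ : ℝ) : ℂ) • x) (((ry⁻¹ : ℝ) : ℂ) • y) hx' hy'
    rw [tensorVec_smul] at key
    rw [smul_quad, smul_quad, smul_quad] at key
    push_cast at key
    have hrx0 : (rx : ℂ) ≠ 0 := by exact_mod_cast hrx.ne'
    have hry0 : (ry : ℂ) ≠ 0 := by exact_mod_cast hry.ne'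
    field_simp at key
    have key' : (star (tensorVec x y) ⬝ᵥ σ.mulVec (tensorVec x y)) * ((rx : ℂ) * ry) ^ 2
        = ((star x ⬝ᵥ A.mulVec x) * (star y ⬝ᵥ B.mulVec y)) * ((rx : ℂ) * ry) ^ 2 := by
      linear_combination ((rx : ℂ) * ry) ^ 2 * key
    exact mul_right_cancel₀ (pow_ne_zero 2 (mul_ne_zero hrx0 hry0)) key'
  -- Step 2: the difference has vanishing quadratic form on product vectors.
  have hT : ∀ (x : Fin n → ℂ) (y : Fin m → ℂ),
      star (tensorVec x y) ⬝ᵥ (σ - A ⊗ₖ B).mulVec (tensorVec x y) = 0 := by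
    intro x y
    rw [Matrix.sub_mulVec, dotProduct_sub, h2, kron_quad, sub_self]
  -- Step 3: two-step polarization.
  have hinner : ∀ y : Fin m → ℂ, (Matrix.of fun i i' =>
      star y ⬝ᵥ (Matrix.of fun j j' => (σ - A ⊗ₖ B) (i, j) (i', j')).mulVec y) = 0 := by
    intro y
    apply quad_zero'
    intro x
    rw [← tensor_quad]
    exact hT x y
  have hentry : ∀ (i i' : Fin n),
      (Matrix.of fun j j' => (σ - A ⊗ₖ B) (i, j) (i', j')) = 0 := by
    intro i i'
    apply quad_zero'
    intro y
    have := congrFun (congrFun (hinner y) i) i'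
    simpa using this
  have hT0 : σ - A ⊗ₖ B = 0 := by
    ext p q
    have := congrFun (congrFun (hentry p.1 q.1) p.2) q.2
    simpa using this
  exact sub_eq_zero.mp hT0
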